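/- For μ > 0 let e(μ) < 0 solve (μ/(2π)) ∫_T dq/(𝔢(q) - e(μ)) = 1. Then lim_{μ ↘ 0} e(μ)/μ^{4/3} = -2^{-4/3}. -/

import Mathlib

open Real

noncomputable def 𝔢 (q : ℝ) : ℝ := (1 - Real.cos q) ^ 2

/-- `∫_T dq/(𝔢(q) - z)`. -/
noncomputable def I (z : ℝ) : ℝ := ∫ q in (-π)..π, 1 / (𝔢 q - z)

/-- `Δ(μ; z) = 1 - (μ/(2π)) ∫_T dq/(𝔢(q) - z)`. -/
noncomputable def Δ (μ z : ℝ) : ℝ := 1 - μ / (2 * π) * I z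

open Filter


noncomputable def G (u : ℝ) : ℝ :=
  (1/4) * (Real.log (u^2+2*u+2) - Real.log (u^2-2*u+2))
    + (1/2) * (Real.arctan (u+1) + Real.arctan (u-1))

lemma Qpos (u : ℝ) : 0 < u^2+2*u+2 := by nlinarith [sq_nonneg (u+1)]
lemma Ppos (u : ℝ) : 0 < u^2-2*u+2 := by nlinarith [sq_nonneg (u-1)]
lemma quartic_pos (u : ℝ) : 0 < u^4+4 := by positivity

lemma hG (u : ℝ) : HasDerivAt G (4/(u^4+4)) u := by
  have hq : HasDerivAt (fun u : ℝ => u^2+2*u+2) (2*u+2) u := by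
    simpa using (((hasDerivAt_pow 2 u).add (((hasDerivAt_id u).const_mul 2))).add_const 2)
  have hp : HasDerivAt (fun u : ℝ => u^2-2*u+2) (2*u-2) u := by
    simpa using (((hasDerivAt_pow 2 u).sub (((hasDerivAt_id u).const_mul 2))).add_const 2)
  have hlq := hq.log (Qpos u).ne'
  have hlp := hp.log (Ppos u).ne'
  have ha1 : HasDerivAt (fun u : ℝ => Real.arctan (u+1)) (1/(1+(u+1)^2)) u := by
    simpa using ((hasDerivAt_id u).add_const 1).arctan
  have ha2 : HasDerivAt (fun u : ℝ => Real.arctan (u-1)) (1/(1+(u-1)^2)) u := by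
    simpa using ((hasDerivAt_id u).sub_const 1).arctan
  have h := (((hlq.sub hlp).const_mul (1/4)).add ((ha1.add ha2).const_mul (1/2)))
  refine h.congr_deriv ?_
  have e1 : (1:ℝ)+(u+1)^2 = u^2+2*u+2 := by ring
  have e2 : (1:ℝ)+(u-1)^2 = u^2-2*u+2 := by ring
  rw [e1, e2]
  have h1 := (Qpos u).ne'
  have h2 := (Ppos u).ne'
  have h3 := (quartic_pos u).ne'
  symm
  have hinv : (u^4+4)⁻¹ = (u^2+2*u+2)⁻¹*(u^2-2*u+2)⁻¹ := by
    rw [show u^4+4 = (u^2+2*u+2)*(u^2-2*u+2) by ring, mul_inv]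
  linear_combination (((u+2)/2)*(u^2+2*u+2)⁻¹) * mul_inv_cancel₀ h2 + (((2-u)/2)*(u^2-2*u+2)⁻¹) * mul_inv_cancel₀ h1 + 4 * hinv


lemma G_odd (u : ℝ) : G (-u) = - G u := by
  unfold G
  have e1 : (-u)^2+2*(-u)+2 = u^2-2*u+2 := by ring
  have e2 : (-u)^2-2*(-u)+2 = u^2+2*u+2 := by ring
  have e3 : -u+1 = -(u-1) := by ring
  have e4 : -u-1 = -(u+1) := by ring
  rw [e1, e2, e3, e4, Real.arctan_neg, Real.arctan_neg]
  ring

lemma G_tendsto : Tendsto G atTop (nhds (π/2)) := by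
  have harc : Tendsto Real.arctan atTop (nhds (π/2)) :=
    Real.tendsto_arctan_atTop.mono_right nhdsWithin_le_nhds
  have h1 : Tendsto (fun u : ℝ => Real.arctan (u+1)) atTop (nhds (π/2)) :=
    harc.comp (tendsto_atTop_add_const_right _ 1 tendsto_id)
  have h2 : Tendsto (fun u : ℝ => Real.arctan (u-1)) atTop (nhds (π/2)) :=
    harc.comp (tendsto_atTop_add_const_right _ (-1) tendsto_id)
  have hinv : Tendsto (fun u : ℝ => u⁻¹) atTop (nhds 0) := tendsto_inv_atTop_zero
  have hratio : Tendsto (fun u : ℝ => (u^2+2*u+2)/(u^2-2*u+2)) atTop (nhds 1) := by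
    have hnum : Tendsto (fun u : ℝ => 1+2*u⁻¹+2*u⁻¹^2) atTop (nhds 1) := by
      have := ((tendsto_const_nhds (x := (1:ℝ))).add (hinv.const_mul 2)).add
        ((hinv.pow 2).const_mul 2)
      simpa using this
    have hden : Tendsto (fun u : ℝ => 1-2*u⁻¹+2*u⁻¹^2) atTop (nhds 1) := by
      have := ((tendsto_const_nhds (x := (1:ℝ))).sub (hinv.const_mul 2)).add
        ((hinv.pow 2).const_mul 2)
      simpa using this
    have := hnum.div hden one_ne_zero
    simp only [div_one] at this
    apply this.congr'
    filter_upwards [eventually_gt_atTop (0:ℝ)] with u hu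
    have hu0 : u ≠ 0 := hu.ne'
    have hP := Ppos u
    have hpos2 : (0:ℝ) < 1-2*u⁻¹+2*u⁻¹^2 := by nlinarith [sq_nonneg (2*u⁻¹-1)]
    simp only [Pi.div_apply]
    rw [div_eq_div_iff hpos2.ne' hP.ne']
    field_simp
  have hlog : Tendsto (fun u : ℝ => Real.log (u^2+2*u+2) - Real.log (u^2-2*u+2))
      atTop (nhds 0) := by
    have := (hratio.log one_ne_zero)
    rw [Real.log_one] at this
    apply this.congr
    intro u
    rw [Real.log_div (Qpos u).ne' (Ppos u).ne']
  have := (hlog.const_mul (1/4)).add ((h1.add h2).const_mul (1/2))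
  unfold G
  convert this using 2
  ring

lemma model_denom_pos {c s : ℝ} (hc : 0 < c) (hs : 0 < s) (q : ℝ) :
    0 < c*q^4/4 + s^4*c := by positivity

lemma model_cont {c s : ℝ} (hc : 0 < c) (hs : 0 < s) :
    Continuous (fun q : ℝ => 1/(c*q^4/4 + s^4*c)) := by
  apply continuous_const.div (by continuity)
  exact fun q => (model_denom_pos hc hs q).ne'

lemma model_hasDeriv {c s : ℝ} (hc : 0 < c) (hs : 0 < s) (q : ℝ) :
    HasDerivAt (fun q => (s/(s^4*c)) * G (q/s)) (1/(c*q^4/4 + s^4*c)) q := by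
  have h := ((hG (q/s)).comp q ((hasDerivAt_id q).div_const s)).const_mul (s/(s^4*c))
  refine h.congr_deriv ?_
  have h1 := (quartic_pos (q/s)).ne'
  have h2 := (model_denom_pos hc hs q).ne'
  have hs0 := hs.ne'
  have hc0 := hc.ne'
  field_simp

lemma model_integral {c s : ℝ} (hc : 0 < c) (hs : 0 < s) (δ : ℝ) :
    ∫ q in (-δ)..δ, 1/(c*q^4/4 + s^4*c) = 2*(s/(s^4*c)) * G (δ/s) := by
  rw [intervalIntegral.integral_eq_sub_of_hasDerivAt
    (fun q _ => model_hasDeriv hc hs q) ((model_cont hc hs).intervalIntegrable _ _)]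
  have : (-δ)/s = -(δ/s) := by ring
  rw [this, G_odd]
  ring

lemma tendsto_inner {c δ : ℝ} (hc : 0 < c) (hδ : 0 < δ) :
    Tendsto (fun a : ℝ => δ/(a/c)^((4:ℝ)⁻¹)) (nhdsWithin 0 (Set.Ioi 0)) atTop := by
  have hs : Tendsto (fun a : ℝ => (a/c)^((4:ℝ)⁻¹)) (nhdsWithin 0 (Set.Ioi 0))
      (nhdsWithin 0 (Set.Ioi 0)) := by
    rw [tendsto_nhdsWithin_iff]
    constructor
    · have h0 : Tendsto (fun a : ℝ => a/c) (nhdsWithin 0 (Set.Ioi 0)) (nhds 0) := by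
        have h1 : Tendsto (fun a : ℝ => a/c) (nhds 0) (nhds 0) := by
          simpa using (continuous_id.div_const c).tendsto (0:ℝ)
        exact h1.mono_left nhdsWithin_le_nhds
      have := h0.rpow_const (p := (4:ℝ)⁻¹) (Or.inr (by norm_num))
      simpa [Real.zero_rpow] using this
    · filter_upwards [self_mem_nhdsWithin] with a ha
      exact Real.rpow_pos_of_pos (div_pos ha hc) _
  have hinv : Tendsto (fun a : ℝ => ((a/c)^((4:ℝ)⁻¹))⁻¹)
      (nhdsWithin 0 (Set.Ioi 0)) atTop := tendsto_inv_nhdsGT_zero.comp hs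
  have := hinv.const_mul_atTop hδ
  simpa [div_eq_mul_inv] using this

lemma model_tendsto {c δ : ℝ} (hc : 0 < c) (hδ : 0 < δ) :
    Tendsto (fun a : ℝ => a^((3:ℝ)/4) * ∫ q in (-δ)..δ, 1/(c*q^4/4+a))
      (nhdsWithin 0 (Set.Ioi 0)) (nhds (π/c^((4:ℝ)⁻¹))) := by
  have key : ∀ a ∈ Set.Ioi (0:ℝ), a^((3:ℝ)/4) * ∫ q in (-δ)..δ, 1/(c*q^4/4+a)
      = (2/c^((4:ℝ)⁻¹)) * G (δ/(a/c)^((4:ℝ)⁻¹)) := by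
    intro a ha
    rw [Set.mem_Ioi] at ha
    set s : ℝ := (a/c)^((4:ℝ)⁻¹) with hs_def
    have hs : 0 < s := Real.rpow_pos_of_pos (div_pos ha hc) _
    have hs4 : s^4*c = a := by
      rw [hs_def, ← Real.rpow_natCast ((a/c)^((4:ℝ)⁻¹)) 4, ← Real.rpow_mul (div_pos ha hc).le]
      norm_num
      field_simp
    have hint := model_integral hc hs δ
    rw [hs4] at hint
    rw [hint]
    have hsa : s = a^((4:ℝ)⁻¹)/c^((4:ℝ)⁻¹) := by
      rw [hs_def, Real.div_rpow ha.le hc.le]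
    have haa : a^((3:ℝ)/4)*a^((4:ℝ)⁻¹) = a := by
      rw [← Real.rpow_add ha]
      norm_num
    have hc4 : (0:ℝ) < c^((4:ℝ)⁻¹) := Real.rpow_pos_of_pos hc _
    have hmain : a^((3:ℝ)/4) * (s/a) = 1/c^((4:ℝ)⁻¹) := by
      rw [hsa, div_div, ← mul_div_assoc, haa, mul_comm, ← div_div, div_self ha.ne']
    linear_combination 2 * G (δ/s) * hmain
  have hG2 : Tendsto (fun a : ℝ => (2/c^((4:ℝ)⁻¹)) * G (δ/(a/c)^((4:ℝ)⁻¹)))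
      (nhdsWithin 0 (Set.Ioi 0)) (nhds ((2/c^((4:ℝ)⁻¹)) * (π/2))) :=
    (G_tendsto.comp (tendsto_inner hc hδ)).const_mul _
  have : (2/c^((4:ℝ)⁻¹)) * (π/2) = π/c^((4:ℝ)⁻¹) := by ring
  rw [this] at hG2
  exact hG2.congr' (by filter_upwards [self_mem_nhdsWithin] with a ha using (key a ha).symm)
lemma e_cont : Continuous 𝔢 := by unfold 𝔢; continuity

lemma e_nonneg (q : ℝ) : 0 ≤ 𝔢 q := sq_nonneg _

lemma e_even (q : ℝ) : 𝔢 (-q) = 𝔢 q := by unfold 𝔢; rw [Real.cos_neg]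

lemma e_mono {x y : ℝ} (hx : 0 ≤ x) (hxy : x ≤ y) (hy : y ≤ π) : 𝔢 x ≤ 𝔢 y := by
  unfold 𝔢
  have h := Real.cos_le_cos_of_nonneg_of_le_pi hx hy hxy
  have h2 : Real.cos x ≤ 1 := Real.cos_le_one x
  nlinarith [Real.cos_le_one y]

lemma e_pos {x : ℝ} (hx : 0 < x) (hxπ : x ≤ π) : 0 < 𝔢 x := by
  unfold 𝔢
  have : Real.cos x < 1 := by
    have := Real.cos_lt_cos_of_nonneg_of_le_pi le_rfl hxπ hx
    simpa using this
  nlinarith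

lemma e_squeeze {ε' q : ℝ} (hε : 0 < ε') (hε1 : ε' ≤ 1) (hq1 : q^2 ≤ 1) (hqε : q^2 ≤ ε') :
    (1-ε')*q^4/4 ≤ 𝔢 q ∧ 𝔢 q ≤ (1+ε')*q^4/4 := by
  have habs : |q| ≤ 1 := by
    nlinarith [abs_nonneg q, sq_abs q]
  have hb := Real.cos_bound habs
  rw [abs_le] at hb
  have h1 : q^2/2 - q^4*(5/96) ≤ 1 - Real.cos q := by
    have := hb.2
    rw [← sq_abs q] at *
    nlinarith [sq_abs q, sq_nonneg q]
  have h2 : 1 - Real.cos q ≤ q^2/2 + q^4*(5/96) := by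
    have := hb.1
    nlinarith [sq_abs q]
  have h0 : 0 ≤ 1 - Real.cos q := by nlinarith [Real.cos_le_one q]
  unfold 𝔢
  have h42 : q^4 ≤ q^2 := by nlinarith [sq_nonneg q, sq_nonneg (q^2)]
  have h40 : (0:ℝ) ≤ q^4 := by positivity
  have hd : 0 ≤ ε' - q^2 := by linarith
  have hL : 0 ≤ q^2/2 - q^4*(5/96) := by nlinarith
  have hlow : (q^2/2 - q^4*(5/96))^2 ≤ (1 - Real.cos q)^2 := pow_le_pow_left₀ hL h1 2
  have hup : (1 - Real.cos q)^2 ≤ (q^2/2 + q^4*(5/96))^2 := pow_le_pow_left₀ h0 h2 2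
  constructor
  · nlinarith [hlow, mul_nonneg h40 hd, mul_nonneg (mul_nonneg h40 (sq_nonneg q)) hd,
      sq_nonneg (q^4), mul_nonneg (mul_nonneg h40 h40) hd]
  · nlinarith [hup, mul_nonneg h40 hd, mul_nonneg (mul_nonneg h40 (sq_nonneg q)) hd,
      sq_nonneg (q^4), mul_nonneg (mul_nonneg h40 h40) hd]

lemma denom_pos {a : ℝ} (ha : 0 < a) (q : ℝ) : 0 < 𝔢 q + a := by
  have := e_nonneg q; linarith

lemma integrand_cont {a : ℝ} (ha : 0 < a) : Continuous (fun q => 1/(𝔢 q + a)) :=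
  continuous_const.div (e_cont.add continuous_const) (fun q => (denom_pos ha q).ne')

lemma I_eq (a : ℝ) : I (-a) = ∫ q in (-π)..π, 1/(𝔢 q + a) := by
  unfold I; simp only [sub_neg_eq_add]

lemma I_le {z : ℝ} (hz : z < 0) : I z ≤ 2*π/(-z) := by
  have hz' : 0 < -z := neg_pos.2 hz
  have hcont : Continuous (fun q => 1/(𝔢 q - z)) := by
    apply continuous_const.div (e_cont.sub continuous_const)
    intro q; have := e_nonneg q; show 𝔢 q - z ≠ 0; nlinarith
  have hle : I z ≤ ∫ _ in (-π)..π, 1/(-z) := by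
    unfold I
    apply intervalIntegral.integral_mono_on (by linarith [Real.pi_pos])
      (hcont.intervalIntegrable _ _) (intervalIntegrable_const)
    intro q _
    apply one_div_le_one_div_of_le hz'
    have := e_nonneg q; linarith
  calc I z ≤ ∫ _ in (-π)..π, 1/(-z) := hle
    _ = 2*π/(-z) := by
        rw [intervalIntegral.integral_const, smul_eq_mul]
        have hz0 : z ≠ 0 := hz.ne
        field_simp
        ring

set_option maxHeartbeats 1000000 in
lemma I_asymp : Tendsto (fun a : ℝ => a^((3:ℝ)/4) * I (-a))
    (nhdsWithin 0 (Set.Ioi 0)) (nhds π) := by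
  rw [Metric.tendsto_nhds]
  intro ε hε
  have hπ := Real.pi_pos
  set ε' : ℝ := min (1/2) (ε/(8*π)) with hε'def
  have hε'pos : 0 < ε' := lt_min (by norm_num) (by positivity)
  have hε'half : ε' ≤ 1/2 := min_le_left _ _
  have hε'1 : ε' ≤ 1 := by linarith
  have hε'ε : 8*π*ε' ≤ ε := by
    have : ε' ≤ ε/(8*π) := min_le_right _ _
    calc 8*π*ε' ≤ 8*π*(ε/(8*π)) := by
          apply mul_le_mul_of_nonneg_left this (by positivity)
      _ = ε := by field_simp
  set δ₀ : ℝ := min 1 (Real.sqrt ε') with hδ₀def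
  have hδ₀pos : 0 < δ₀ := lt_min one_pos (Real.sqrt_pos.2 hε'pos)
  have hδ₀1 : δ₀ ≤ 1 := min_le_left _ _
  have hδ₀π : δ₀ ≤ π := hδ₀1.trans (by linarith [Real.pi_gt_three])
  have hδ₀sq : δ₀^2 ≤ ε' := by
    have h1 : δ₀ ≤ Real.sqrt ε' := min_le_right _ _
    calc δ₀^2 ≤ (Real.sqrt ε')^2 := by
          apply pow_le_pow_left₀ hδ₀pos.le h1
      _ = ε' := Real.sq_sqrt hε'pos.le
  have hEδ₀ : 0 < 𝔢 δ₀ := e_pos hδ₀pos hδ₀π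
  -- limits of the comparison functions
  have hm : (0:ℝ) < 1 - ε' := by linarith
  have hp : (0:ℝ) < 1 + ε' := by linarith
  have hupper_lim : π/(1-ε')^((4:ℝ)⁻¹) ≤ π + ε/4 := by
    have h1 : (1-ε') ≤ (1-ε')^((4:ℝ)⁻¹) := by
      have := Real.rpow_le_rpow_of_exponent_ge hm (by linarith) (by norm_num : (4:ℝ)⁻¹ ≤ 1)
      simpa [Real.rpow_one] using this
    have h2 : π/(1-ε')^((4:ℝ)⁻¹) ≤ π/(1-ε') := by
      apply div_le_div_of_nonneg_left hπ.le hm h1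
    have h3 : π/(1-ε') ≤ π*(1+2*ε') := by
      rw [div_le_iff₀ hm]
      nlinarith [mul_nonneg hπ.le (mul_nonneg hε'pos.le (by linarith : (0:ℝ) ≤ 1 - 2*ε'))]
    nlinarith
  have hlower_lim : π - ε/4 ≤ π/(1+ε')^((4:ℝ)⁻¹) := by
    have h1 : (1+ε')^((4:ℝ)⁻¹) ≤ 1+ε' := by
      have := Real.rpow_le_rpow_of_exponent_le (by linarith : (1:ℝ) ≤ 1+ε') (by norm_num : (4:ℝ)⁻¹ ≤ 1)
      simpa [Real.rpow_one] using this
    have h2 : π/(1+ε') ≤ π/(1+ε')^((4:ℝ)⁻¹) := by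
      apply div_le_div_of_nonneg_left hπ.le (by positivity) h1
    have h3 : π*(1-ε') ≤ π/(1+ε') := by
      rw [le_div_iff₀ hp]
      nlinarith [mul_nonneg hπ.le (sq_nonneg ε')]
    nlinarith
  -- pointwise bounds for a > 0
  have hbound : ∀ a ∈ Set.Ioi (0:ℝ),
      a^((3:ℝ)/4) * (∫ q in (-δ₀)..δ₀, 1/((1+ε')*q^4/4+a)) ≤ a^((3:ℝ)/4) * I (-a) ∧
      a^((3:ℝ)/4) * I (-a) ≤ a^((3:ℝ)/4) * (∫ q in (-δ₀)..δ₀, 1/((1-ε')*q^4/4+a))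
        + a^((3:ℝ)/4) * (2*π/𝔢 δ₀) := by
    intro a ha
    rw [Set.mem_Ioi] at ha
    have ha34 : (0:ℝ) ≤ a^((3:ℝ)/4) := Real.rpow_nonneg ha.le _
    have hgint : ∀ x y : ℝ, IntervalIntegrable (fun q => 1/(𝔢 q + a))
        MeasureTheory.volume x y := fun x y => ((integrand_cont ha).intervalIntegrable _ _)
    have hsplit : I (-a) = (∫ q in (-π)..(-δ₀), 1/(𝔢 q + a))
        + (∫ q in (-δ₀)..δ₀, 1/(𝔢 q + a)) + (∫ q in (δ₀)..π, 1/(𝔢 q + a)) := by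
      have h1 := intervalIntegral.integral_add_adjacent_intervals
        (hgint (-π) (-δ₀)) (hgint (-δ₀) δ₀)
      have h2 := intervalIntegral.integral_add_adjacent_intervals
        ((hgint (-π) (-δ₀)).trans (hgint (-δ₀) δ₀)) (hgint δ₀ π)
      rw [I_eq, ← h2, ← h1]
    have houter1 : 0 ≤ ∫ q in (-π)..(-δ₀), 1/(𝔢 q + a) := by
      apply intervalIntegral.integral_nonneg (by linarith)
      intro q _
      exact (one_div_pos.2 (denom_pos ha q)).le
    have houter2 : 0 ≤ ∫ q in (δ₀)..π, 1/(𝔢 q + a) := by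
      apply intervalIntegral.integral_nonneg (by linarith)
      intro q _
      exact (one_div_pos.2 (denom_pos ha q)).le
    have houter1' : (∫ q in (-π)..(-δ₀), 1/(𝔢 q + a)) ≤ π/𝔢 δ₀ := by
      have : (∫ q in (-π)..(-δ₀), 1/(𝔢 q + a)) ≤ ∫ _ in (-π)..(-δ₀), 1/𝔢 δ₀ := by
        apply intervalIntegral.integral_mono_on (by linarith) (hgint _ _)
          intervalIntegrable_const
        intro q hq
        apply one_div_le_one_div_of_le hEδ₀
        have h1 : 𝔢 δ₀ ≤ 𝔢 (-q) := e_mono hδ₀pos.le (by linarith [hq.2]) (by linarith [hq.1])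
        rw [e_even] at h1
        linarith
      calc (∫ q in (-π)..(-δ₀), 1/(𝔢 q + a)) ≤ ∫ _ in (-π)..(-δ₀), 1/𝔢 δ₀ := this
        _ = (π - δ₀) * (1/𝔢 δ₀) := by
            rw [intervalIntegral.integral_const, smul_eq_mul]; try ring
        _ ≤ π/𝔢 δ₀ := by
            rw [div_eq_mul_one_div π]
            apply mul_le_mul_of_nonneg_right (by linarith) (one_div_pos.2 hEδ₀).le
    have houter2' : (∫ q in (δ₀)..π, 1/(𝔢 q + a)) ≤ π/𝔢 δ₀ := by
      have : (∫ q in (δ₀)..π, 1/(𝔢 q + a)) ≤ ∫ _ in (δ₀)..π, 1/𝔢 δ₀ := by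
        apply intervalIntegral.integral_mono_on (by linarith) (hgint _ _)
          intervalIntegrable_const
        intro q hq
        apply one_div_le_one_div_of_le hEδ₀
        have h1 : 𝔢 δ₀ ≤ 𝔢 q := e_mono hδ₀pos.le hq.1 hq.2
        linarith
      calc (∫ q in (δ₀)..π, 1/(𝔢 q + a)) ≤ ∫ _ in (δ₀)..π, 1/𝔢 δ₀ := this
        _ = (π - δ₀) * (1/𝔢 δ₀) := by
            rw [intervalIntegral.integral_const, smul_eq_mul]; try ring
        _ ≤ π/𝔢 δ₀ := by
            rw [div_eq_mul_one_div π]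
            apply mul_le_mul_of_nonneg_right (by linarith) (one_div_pos.2 hEδ₀).le
    have hsq : ∀ q ∈ Set.Icc (-δ₀) δ₀,
        (1-ε')*q^4/4 ≤ 𝔢 q ∧ 𝔢 q ≤ (1+ε')*q^4/4 := by
      intro q hq
      have hq2 : q^2 ≤ δ₀^2 := sq_le_sq' hq.1 hq.2
      exact e_squeeze hε'pos hε'1 (hq2.trans (by nlinarith)) (hq2.trans hδ₀sq)
    have hcp : Continuous (fun q : ℝ => 1/((1+ε')*q^4/4+a)) := by
      apply continuous_const.div (((continuous_const.mul (continuous_pow 4)).div_const 4).add continuous_const)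
      intro q
      have h4 : (0:ℝ) ≤ q^4 := by positivity
      show (1+ε')*q^4/4+a ≠ 0
      exact ne_of_gt (by nlinarith)
    have hcm : Continuous (fun q : ℝ => 1/((1-ε')*q^4/4+a)) := by
      apply continuous_const.div (((continuous_const.mul (continuous_pow 4)).div_const 4).add continuous_const)
      intro q
      have h4 : (0:ℝ) ≤ q^4 := by positivity
      show (1-ε')*q^4/4+a ≠ 0
      exact ne_of_gt (by nlinarith [mul_nonneg hm.le h4])
    have hmid_lo : (∫ q in (-δ₀)..δ₀, 1/((1+ε')*q^4/4+a)) ≤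
        ∫ q in (-δ₀)..δ₀, 1/(𝔢 q + a) := by
      apply intervalIntegral.integral_mono_on (by linarith)
        (hcp.intervalIntegrable _ _) (hgint _ _)
      intro q hq
      apply one_div_le_one_div_of_le (denom_pos ha q)
      linarith [(hsq q hq).2]
    have hmid_hi : (∫ q in (-δ₀)..δ₀, 1/(𝔢 q + a)) ≤
        ∫ q in (-δ₀)..δ₀, 1/((1-ε')*q^4/4+a) := by
      apply intervalIntegral.integral_mono_on (by linarith) (hgint _ _)
        (hcm.intervalIntegrable _ _)
      intro q hq
      have h1 : (0:ℝ) < (1-ε')*q^4/4 + a := by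
        have h4 : (0:ℝ) ≤ q^4 := by positivity
        nlinarith [mul_nonneg hm.le h4]
      apply one_div_le_one_div_of_le h1
      linarith [(hsq q hq).1]
    constructor
    · apply mul_le_mul_of_nonneg_left _ ha34
      calc (∫ q in (-δ₀)..δ₀, 1/((1+ε')*q^4/4+a)) ≤ ∫ q in (-δ₀)..δ₀, 1/(𝔢 q + a) := hmid_lo
        _ ≤ I (-a) := by rw [hsplit]; linarith
    · have : I (-a) ≤ (∫ q in (-δ₀)..δ₀, 1/((1-ε')*q^4/4+a)) + 2*π/𝔢 δ₀ := by
        rw [hsplit]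
        have h2π : 2*π/𝔢 δ₀ = π/𝔢 δ₀ + π/𝔢 δ₀ := by ring
        linarith [hmid_hi]
      calc a^((3:ℝ)/4) * I (-a)
          ≤ a^((3:ℝ)/4) * ((∫ q in (-δ₀)..δ₀, 1/((1-ε')*q^4/4+a)) + 2*π/𝔢 δ₀) :=
            mul_le_mul_of_nonneg_left this ha34
        _ = _ := by ring
  -- tendsto of comparison functions
  have hKp := model_tendsto (c := 1+ε') (δ := δ₀) hp hδ₀pos
  have hKm := model_tendsto (c := 1-ε') (δ := δ₀) hm hδ₀pos
  have hz : Tendsto (fun a : ℝ => a^((3:ℝ)/4) * (2*π/𝔢 δ₀))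
      (nhdsWithin 0 (Set.Ioi 0)) (nhds 0) := by
    have h0 : Tendsto (fun a : ℝ => a^((3:ℝ)/4)) (nhdsWithin 0 (Set.Ioi 0)) (nhds 0) := by
      have h1 : Tendsto (fun a : ℝ => a) (nhdsWithin 0 (Set.Ioi 0)) (nhds 0) :=
        tendsto_id.mono_right nhdsWithin_le_nhds
      have := h1.rpow_const (p := (3:ℝ)/4) (Or.inr (by norm_num))
      simpa [Real.zero_rpow] using this
    simpa using h0.mul_const (2*π/𝔢 δ₀)
  have hup : Tendsto (fun a : ℝ => a^((3:ℝ)/4) * (∫ q in (-δ₀)..δ₀, 1/((1-ε')*q^4/4+a))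
      + a^((3:ℝ)/4) * (2*π/𝔢 δ₀)) (nhdsWithin 0 (Set.Ioi 0))
      (nhds (π/(1-ε')^((4:ℝ)⁻¹) + 0)) := hKm.add hz
  rw [add_zero] at hup
  have hupev : ∀ᶠ a in nhdsWithin 0 (Set.Ioi 0),
      a^((3:ℝ)/4) * (∫ q in (-δ₀)..δ₀, 1/((1-ε')*q^4/4+a))
        + a^((3:ℝ)/4) * (2*π/𝔢 δ₀) < π + ε/2 :=
    hup.eventually_lt_const (by linarith)
  have hloev : ∀ᶠ a in nhdsWithin 0 (Set.Ioi 0),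
      π - ε/2 < a^((3:ℝ)/4) * (∫ q in (-δ₀)..δ₀, 1/((1+ε')*q^4/4+a)) :=
    hKp.eventually_const_lt (by linarith)
  filter_upwards [hupev, hloev, self_mem_nhdsWithin] with a h1 h2 ha
  have hb := hbound a ha
  rw [Real.dist_eq, abs_lt]
  constructor <;> nlinarith [hb.1, hb.2]

theorem e_asymptotic_at_zero_pos (e : ℝ → ℝ)
    (he : ∀ μ > (0 : ℝ), e μ < 0 ∧ μ / (2 * π) * I (e μ) = 1) :
    Filter.Tendsto (fun μ => e μ / μ ^ ((4 : ℝ) / 3))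
      (nhdsWithin 0 (Set.Ioi 0)) (nhds (-(1 / 2 ^ ((4 : ℝ) / 3)))) := by
  have hπ := Real.pi_pos
  have hIe : ∀ μ > (0:ℝ), I (e μ) = 2*π/μ := by
    intro μ hμ
    have h := (he μ hμ).2
    have hμ0 : μ ≠ 0 := hμ.ne'
    have hπ0 : (2*π) ≠ 0 := by positivity
    field_simp at h
    rw [eq_div_iff hμ0]
    linarith
  have hbound : ∀ μ > (0:ℝ), -e μ ≤ μ := by
    intro μ hμ
    have h1 := I_le (he μ hμ).1
    rw [hIe μ hμ] at h1
    have hne : 0 < -e μ := neg_pos.2 (he μ hμ).1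
    rw [div_le_div_iff₀ hμ hne] at h1
    nlinarith
  have ha_tendsto : Tendsto (fun μ => -e μ) (nhdsWithin 0 (Set.Ioi 0))
      (nhdsWithin 0 (Set.Ioi 0)) := by
    rw [tendsto_nhdsWithin_iff]
    constructor
    · apply tendsto_of_tendsto_of_tendsto_of_le_of_le' tendsto_const_nhds
        (tendsto_id.mono_right nhdsWithin_le_nhds)
      · filter_upwards [self_mem_nhdsWithin] with μ hμ
        exact (neg_pos.2 (he μ hμ).1).le
      · filter_upwards [self_mem_nhdsWithin] with μ hμ
        exact hbound μ hμ
    · filter_upwards [self_mem_nhdsWithin] with μ hμ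
      exact neg_pos.2 (he μ hμ).1
  have hcomp := I_asymp.comp ha_tendsto
  simp only [Function.comp_def, neg_neg] at hcomp
  have h2 : Tendsto (fun μ => (-e μ)^((3:ℝ)/4) * (2*π/μ)) (nhdsWithin 0 (Set.Ioi 0))
      (nhds π) := by
    apply hcomp.congr'
    filter_upwards [self_mem_nhdsWithin] with μ hμ
    rw [hIe μ hμ]
  have h3 : Tendsto (fun μ => (-e μ)^((3:ℝ)/4)/μ) (nhdsWithin 0 (Set.Ioi 0))
      (nhds ((1:ℝ)/2)) := by
    have h4 := h2.mul_const (1/(2*π))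
    have hval : π * (1/(2*π)) = 1/2 := by
      field_simp
      try ring
    rw [hval] at h4
    apply h4.congr'
    filter_upwards [self_mem_nhdsWithin] with μ hμ
    have hμ0 : μ ≠ 0 := (LT.lt.ne' hμ)
    have hπ0 : (2*π) ≠ 0 := by positivity
    field_simp
  have h5 := h3.rpow_const (p := (4:ℝ)/3) (Or.inr (by norm_num))
  have hval2 : ((1:ℝ)/2) ^ ((4:ℝ)/3) = 1/2^((4:ℝ)/3) := by
    rw [Real.div_rpow zero_le_one (by norm_num : (0:ℝ) ≤ 2), Real.one_rpow]
  rw [hval2] at h5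
  apply h5.neg.congr'
  filter_upwards [self_mem_nhdsWithin] with μ hμ
  have hne : 0 < -e μ := neg_pos.2 (he μ hμ).1
  have h6 : ((-e μ)^((3:ℝ)/4)/μ)^((4:ℝ)/3)
      = ((-e μ)^((3:ℝ)/4))^((4:ℝ)/3)/μ^((4:ℝ)/3) :=
    Real.div_rpow (Real.rpow_nonneg hne.le _) hμ.le _
  have h7 : ((-e μ)^((3:ℝ)/4))^((4:ℝ)/3) = -e μ := by
    rw [← Real.rpow_mul hne.le]
    norm_num
  rw [h6, h7]
  rw [neg_div, neg_neg]
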